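/- Let T_m be a complete local commutative ring, finite free over ℤ_p, and let H be a T_m-module, finite free over ℤ_p, such that H ⊗ ℚ_p is free of rank r over T_m ⊗ ℚ_p and H/mH has dimension at most r over T_m/m. Then H is free of rank r as a T_m-module. -/

import Mathlib

open TensorProduct

/-- Let `T_m` be a (complete) local commutative ring, finite free over `ℤ_p`,
with maximal ideal `m`, and let `H` be a `T_m`-module, finite free over `ℤ_p`, such that
`H ⊗ ℚ_p` is free of rank `r` over `T_m ⊗ ℚ_p` (encoded: a `T_m`-linear map `T_m^r → H`
becoming bijective after `⊗ ℚ_p`) and `dim_{T_m/m}(H/mH) ≤ r`.  Then `H` is free of rank `r`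
as a `T_m`-module (encoded: there is a bijective `T_m`-linear map `T_m^r → H`). -/
theorem statement8
    (p : ℕ) [Fact p.Prime]
    (Tm : Type*) [CommRing Tm] [IsLocalRing Tm] [Algebra ℤ_[p] Tm]
    [Module.Free ℤ_[p] Tm] [Module.Finite ℤ_[p] Tm]
    (H : Type*) [AddCommGroup H] [Module Tm H] [Module ℤ_[p] H] [IsScalarTower ℤ_[p] Tm H]
    [Module.Free ℤ_[p] H] [Module.Finite ℤ_[p] H]
    (r : ℕ)
    (hrat : ∃ φ : (Fin r → Tm) →ₗ[Tm] H,
      Function.Bijective ((φ.restrictScalars ℤ_[p]).baseChange ℚ_[p]))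
    (hdim : Module.rank (Tm ⧸ IsLocalRing.maximalIdeal Tm)
      (H ⧸ ((IsLocalRing.maximalIdeal Tm) • ⊤ : Submodule Tm H)) ≤ r) :
    ∃ ψ : (Fin r → Tm) →ₗ[Tm] H, Function.Bijective ψ := by
  classical
  obtain ⟨φ, hφ⟩ := hrat
  set m : Ideal Tm := IsLocalRing.maximalIdeal Tm with hm
  letI : Field (Tm ⧸ m) := Ideal.Quotient.field m
  set N : Submodule Tm H := (m • ⊤ : Submodule Tm H) with hN
  -- the quotient is a finite-dimensional vector space over the residue field
  have hQfin : Module.Finite (Tm ⧸ m) (H ⧸ N) := by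
    rw [← Module.rank_lt_aleph0_iff]
    exact lt_of_le_of_lt hdim (Cardinal.nat_lt_aleph0 r)
  have hfr : Module.finrank (Tm ⧸ m) (H ⧸ N) ≤ r := Module.finrank_le_of_rank_le hdim
  set n : ℕ := Module.finrank (Tm ⧸ m) (H ⧸ N) with hn
  let b : Module.Basis (Fin n) (Tm ⧸ m) (H ⧸ N) := Module.finBasis (Tm ⧸ m) (H ⧸ N)
  -- a spanning family of size r in the quotient
  let g : Fin r → (H ⧸ N) := fun i => if h : (i : ℕ) < n then b ⟨i, h⟩ else 0
  have hspanQ : Submodule.span (Tm ⧸ m) (Set.range g) = ⊤ := by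
    rw [← top_le_iff, ← b.span_eq]
    apply Submodule.span_le.2
    rintro x ⟨j, rfl⟩
    apply Submodule.subset_span
    refine ⟨⟨j, lt_of_lt_of_le j.2 hfr⟩, ?_⟩
    simp [g, j.2]
  -- lift it to H
  have hlift : ∀ i : Fin r, ∃ y : H, Submodule.Quotient.mk y = g i := fun i =>
    Submodule.Quotient.mk_surjective N (g i)
  choose f hf using hlift
  have hTmfin : Module.Finite Tm H := Module.Finite.of_restrictScalars_finite ℤ_[p] Tm H
  -- Nakayama: f spans H over Tm
  have hspan : Submodule.span Tm (Set.range f) = ⊤ := by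
    have hrange : Set.range g = N.mkQ '' Set.range f := by
      ext x
      constructor
      · rintro ⟨i, rfl⟩; exact ⟨f i, ⟨i, rfl⟩, hf i⟩
      · rintro ⟨y, ⟨i, rfl⟩, rfl⟩; exact ⟨i, (hf i).symm⟩
    have hmap : Submodule.map N.mkQ (Submodule.span Tm (Set.range f)) = ⊤ := by
      rw [Submodule.map_span, ← hrange]
      have := Submodule.restrictScalars_span Tm (Tm ⧸ m) Ideal.Quotient.mk_surjective
        (Set.range g)
      rw [← top_le_iff]
      intro x _
      have hx : x ∈ (Submodule.span (Tm ⧸ m) (Set.range g)).restrictScalars Tm := by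
        rw [hspanQ]; trivial
      rw [this] at hx
      exact hx
    have hsup : Submodule.span Tm (Set.range f) ⊔ N = ⊤ := by
      have h2 := Submodule.comap_map_eq N.mkQ (Submodule.span Tm (Set.range f))
      rw [hmap, Submodule.comap_top, Submodule.ker_mkQ] at h2
      exact h2.symm
    rw [← top_le_iff]
    refine Submodule.le_of_le_smul_of_le_jacobson_bot (Module.finite_def.mp hTmfin)
      (IsLocalRing.jacobson_eq_maximalIdeal ⊥ bot_ne_top).ge ?_
    exact hsup.ge
  let ψ : (Fin r → Tm) →ₗ[Tm] H := Fintype.linearCombination Tm f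
  have hψsurj : Function.Surjective ψ := by
    rw [← LinearMap.range_eq_top, Fintype.range_linearCombination, hspan]
  -- base change
  have hψ'surj : Function.Surjective ((ψ.restrictScalars ℤ_[p]).baseChange ℚ_[p]) := by
    rw [LinearMap.baseChange_eq_ltensor]
    exact LinearMap.lTensor_surjective ℚ_[p] hψsurj
  have hfreq : Module.finrank ℚ_[p] (ℚ_[p] ⊗[ℤ_[p]] (Fin r → Tm)) =
      Module.finrank ℚ_[p] (ℚ_[p] ⊗[ℤ_[p]] H) :=
    (LinearEquiv.ofBijective _ hφ).finrank_eq
  have hψ'inj : Function.Injective ((ψ.restrictScalars ℤ_[p]).baseChange ℚ_[p]) :=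
    (LinearMap.injective_iff_surjective_of_finrank_eq_finrank hfreq).mpr hψ'surj
  -- injectivity of ψ
  have hψinj : Function.Injective ψ := by
    rw [← LinearMap.ker_eq_bot, Submodule.eq_bot_iff]
    intro x hx
    have h0 : ((ψ.restrictScalars ℤ_[p]).baseChange ℚ_[p]) ((1 : ℚ_[p]) ⊗ₜ x) = 0 := by
      rw [LinearMap.baseChange_tmul]
      simp only [LinearMap.coe_restrictScalars]
      rw [hx]
      exact TensorProduct.tmul_zero _ _
    have h1 : (1 : ℚ_[p]) ⊗ₜ[ℤ_[p]] x = 0 := hψ'inj (by simpa using h0)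
    let c : Module.Basis _ ℤ_[p] (Fin r → Tm) := Module.Free.chooseBasis ℤ_[p] (Fin r → Tm)
    have hrepr : ∀ i, c.repr x i = 0 := by
      intro i
      have h2 : ((c.baseChange ℚ_[p]).repr ((1 : ℚ_[p]) ⊗ₜ[ℤ_[p]] x)) i = 0 := by
        rw [h1, (c.baseChange ℚ_[p]).repr.map_zero]; rfl
      rw [Module.Basis.baseChange_repr_tmul] at h2
      have h3 : (algebraMap ℤ_[p] ℚ_[p]) (c.repr x i) = 0 := by
        rwa [Algebra.algebraMap_eq_smul_one]
      exact (IsFractionRing.injective ℤ_[p] ℚ_[p]) (by simpa using h3)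
    apply c.repr.injective
    ext i
    simp [hrepr i]
  exact ⟨ψ, hψinj, hψsurj⟩
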